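/- An n×m integer matrix A with n > m is rectangular-unimodular (the gcd of its m×m minors is 1) if and only if all diagonal entries of HNF(A) equal 1. -/

import Mathlib

/-- `H` is in Hermite normal form with `r` nonzero rows and pivot columns `j`. -/
def IsHNFWith {n m : ℕ} (H : Matrix (Fin n) (Fin m) ℤ) (r : ℕ) (hr : r ≤ n)
    (j : Fin r → Fin m) : Prop :=
  StrictMono j ∧
  (∀ i : Fin n, r ≤ (i : ℕ) → ∀ l, H i l = 0) ∧
  (∀ i : Fin r, 0 < H (Fin.castLE hr i) (j i)) ∧
  (∀ i : Fin r, ∀ l : Fin m, (l : ℕ) < (j i : ℕ) → H (Fin.castLE hr i) l = 0) ∧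
  (∀ i : Fin r, ∀ k : Fin n, (k : ℕ) < (i : ℕ) →
    0 ≤ H k (j i) ∧ H k (j i) < H (Fin.castLE hr i) (j i))

/-- `H` is in Hermite normal form. -/
def IsHNF {n m : ℕ} (H : Matrix (Fin n) (Fin m) ℤ) : Prop :=
  ∃ (r : ℕ) (hr : r ≤ n) (j : Fin r → Fin m), IsHNFWith H r hr j

/-- A square integer matrix is unimodular if its determinant is `±1`. -/
def IsUnimodular {n : ℕ} (U : Matrix (Fin n) (Fin n) ℤ) : Prop :=
  U.det = 1 ∨ U.det = -1

/-- `H` is the Hermite normal form of `A`: `H` is in HNF and `A = U * H`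
for some unimodular `U`. -/
def IsHNFOf {n m : ℕ} (H A : Matrix (Fin n) (Fin m) ℤ) : Prop :=
  IsHNF H ∧ ∃ U : Matrix (Fin n) (Fin n) ℤ, IsUnimodular U ∧ A = U * H

open scoped Classical in
/-- The gcd of the `i × i` minors of the `n × i` submatrix of `A` formed by the
columns `c`, the minors being indexed by strictly monotone row selections. -/
noncomputable def minorsGcd {n m i : ℕ} (A : Matrix (Fin n) (Fin m) ℤ)
    (c : Fin i → Fin m) : ℤ :=
  Finset.univ.gcd fun ρ : {ρ : Fin i → Fin n // StrictMono ρ} =>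
    (A.submatrix ρ.1 c).det

/- ------------------ auxiliary lemmas ------------------ -/

lemma fin_strictMono_le {a b : ℕ} {f : Fin a → Fin b} (hf : StrictMono f) :
    ∀ x : Fin a, (x : ℕ) ≤ (f x : ℕ) := by
  intro x
  induction' hx : (x : ℕ) with k ih generalizing x
  · exact Nat.zero_le _
  · have hk : k < a := by omega
    have h1 := ih ⟨k, hk⟩ rfl
    have h2 : (⟨k, hk⟩ : Fin a) < x := by simp [Fin.lt_def, hx]
    have h3 := hf h2
    rw [Fin.lt_def] at h3
    omega

/-- A strictly monotone self-map of `Fin m` is the identity. -/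
lemma fin_strictMono_id {a : ℕ} {f : Fin a → Fin a} (hf : StrictMono f) (x : Fin a) :
    f x = x := by
  have hle : ∀ y : Fin a, (y : ℕ) ≤ (f y : ℕ) := fin_strictMono_le hf
  have hg : StrictMono (fun y : Fin a => (f y.rev).rev) := by
    intro y z hyz
    simp only [Fin.rev_lt_rev]
    exact hf (by simpa [Fin.rev_lt_rev] using hyz)
  have hge := fin_strictMono_le hg x.rev
  simp only [Fin.val_rev, Fin.rev_rev] at hge
  have h1 := hle x
  have hx := x.isLt
  have hfx := (f x).isLt
  refine Fin.ext ?_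
  omega

open Matrix in
lemma det_mul_submatrix_expand {n m i : ℕ} (V : Matrix (Fin n) (Fin n) ℤ)
    (C : Matrix (Fin n) (Fin m) ℤ) (ρ : Fin i → Fin n) (c : Fin i → Fin m) :
    ((V * C).submatrix ρ c).det
      = ∑ f : Fin i → Fin n, (∏ x, V (ρ x) (f x)) * (C.submatrix f c).det := by
  classical
  have key := (Matrix.detRowAlternating (R := ℤ) (n := Fin i)).toMultilinearMap.map_sum
      (g := fun (x : Fin i) (k : Fin n) => V (ρ x) k • (fun l : Fin i => C k (c l)))
  have h1 : ((V * C).submatrix ρ c).det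
      = (Matrix.detRowAlternating (R := ℤ) (n := Fin i)).toMultilinearMap
        (fun x : Fin i => ∑ k : Fin n, V (ρ x) k • (fun l : Fin i => C k (c l))) := by
    congr 1
    ext x l
    simp [Matrix.mul_apply]
  rw [h1, key]
  refine Finset.sum_congr rfl fun f _ => ?_
  rw [(Matrix.detRowAlternating (R := ℤ) (n := Fin i)).toMultilinearMap.map_smul_univ]
  rfl

lemma minorsGcd_dvd_det_submatrix {n m i : ℕ} (C : Matrix (Fin n) (Fin m) ℤ)
    (c : Fin i → Fin m) (f : Fin i → Fin n) :
    minorsGcd C c ∣ (C.submatrix f c).det := by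
  classical
  by_cases hf : Function.Injective f
  · set σ := Tuple.sort f with hσ
    have hmono : Monotone (f ∘ σ) := Tuple.monotone_sort f
    have hsm : StrictMono (f ∘ σ) :=
      hmono.strictMono_of_injective (hf.comp σ.injective)
    have key : C.submatrix f c = ((C.submatrix (f ∘ σ) c).submatrix σ.symm id) := by
      ext x l
      simp [Matrix.submatrix_apply]
    rw [key, Matrix.det_permute]
    have hd : minorsGcd C c ∣ (C.submatrix (f ∘ σ) c).det := by
      unfold minorsGcd
      exact Finset.gcd_dvd (Finset.mem_univ (⟨f ∘ σ, hsm⟩ : {ρ : Fin i → Fin n // StrictMono ρ}))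
    exact hd.mul_left _
  · rw [Function.not_injective_iff] at hf
    obtain ⟨x, y, hxy, hne⟩ := hf
    have : (C.submatrix f c).det = 0 := by
      apply Matrix.det_zero_of_row_eq hne
      funext l
      simp [Matrix.submatrix_apply, hxy]
    rw [this]
    exact dvd_zero _

lemma minorsGcd_dvd_mul {n m i : ℕ} (V : Matrix (Fin n) (Fin n) ℤ)
    (C : Matrix (Fin n) (Fin m) ℤ) (c : Fin i → Fin m) :
    minorsGcd C c ∣ minorsGcd (V * C) c := by
  classical
  unfold minorsGcd
  apply Finset.dvd_gcd
  rintro ⟨ρ, hρ⟩ -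
  rw [det_mul_submatrix_expand]
  exact Finset.dvd_sum fun f _ =>
    (minorsGcd_dvd_det_submatrix C c f).mul_left _

lemma minorsGcd_nonneg {n m i : ℕ} (B : Matrix (Fin n) (Fin m) ℤ)
    (c : Fin i → Fin m) : 0 ≤ minorsGcd B c := by
  have h : normalize (minorsGcd B c) = minorsGcd B c := by
    unfold minorsGcd
    exact Finset.normalize_gcd
  rw [← h, ← Int.abs_eq_normalize]
  exact abs_nonneg _

lemma prod_pos_eq_one_iff {ι : Type*} (s : Finset ι) (f : ι → ℤ)
    (hf : ∀ i ∈ s, 0 < f i) :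
    ∏ i ∈ s, f i = 1 ↔ ∀ i ∈ s, f i = 1 := by
  constructor
  · intro h i hi
    have hdvd : f i ∣ 1 := h ▸ Finset.dvd_prod_of_mem f hi
    rcases Int.isUnit_iff.mp (isUnit_of_dvd_one hdvd) with h1 | h1
    · exact h1
    · exact absurd (hf i hi) (by rw [h1]; norm_num)
  · intro h
    exact Finset.prod_eq_one h

/- ------------------ main theorem ------------------ -/

/-- For `n > m`, an `n × m` integer matrix is rectangular-unimodular (its `m × m`
minors have gcd `1`) iff all diagonal entries of its HNF equal `1`. -/
theorem rectangular_unimodular_iff_hnf_diag_one (n m : ℕ) (hnm : m < n)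
    (A H : Matrix (Fin n) (Fin m) ℤ) (hH : IsHNFOf H A) :
    minorsGcd A (fun l : Fin m => l) = 1 ↔
      ∀ i : Fin m, H (Fin.castLE (le_of_lt hnm) i) i = 1 := by
  classical
  obtain ⟨⟨r, hr, j, hjmono, hzero, hpos, hlow, _⟩, U, hU, hA⟩ := hH
  set c : Fin m → Fin m := fun l : Fin m => l with hc
  -- the two gcds divide each other
  have h1 : minorsGcd H c ∣ minorsGcd A c := by
    rw [hA]; exact minorsGcd_dvd_mul U H c
  have hUdet : IsUnit U.det := by
    rcases hU with h | h <;> simp [h]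
  have hH' : H = U⁻¹ * A := by
    rw [hA, ← Matrix.mul_assoc, Matrix.nonsing_inv_mul U hUdet, Matrix.one_mul]
  have h2 : minorsGcd A c ∣ minorsGcd H c := by
    conv_rhs => rw [hH']
    exact minorsGcd_dvd_mul U⁻¹ A c
  have hiff : minorsGcd A c = 1 ↔ minorsGcd H c = 1 := by
    constructor
    · intro h
      rw [h] at h1
      rcases Int.isUnit_iff.mp (isUnit_of_dvd_one h1) with h' | h'
      · exact h'
      · have := minorsGcd_nonneg H c; omega
    · intro h
      rw [h] at h2
      rcases Int.isUnit_iff.mp (isUnit_of_dvd_one h2) with h' | h'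
      · exact h'
      · have := minorsGcd_nonneg A c; omega
  rw [hiff]
  -- `r ≤ m`
  have hrm : r ≤ m := by
    simpa using Fintype.card_le_of_injective j hjmono.injective
  rcases lt_or_eq_of_le hrm with hlt | heq
  · -- degenerate case: all minors of `H` vanish and some diagonal entry is `0`
    have hzero' : minorsGcd H c = 0 := by
      unfold minorsGcd
      rw [Finset.gcd_eq_zero_iff]
      rintro ⟨ρ, hρ⟩ -
      have hm1 : m - 1 < m := by omega
      set x : Fin m := ⟨m - 1, hm1⟩ with hx
      apply Matrix.det_eq_zero_of_row_eq_zero x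
      intro l
      have hge : r ≤ ((ρ x : Fin n) : ℕ) := by
        have h1 := fin_strictMono_le hρ x
        have h2 : (x : ℕ) = m - 1 := rfl
        omega
      simp [Matrix.submatrix_apply, hzero (ρ x) hge]
    constructor
    · intro h; rw [hzero'] at h; exact absurd h (by norm_num)
    · intro h
      exfalso
      have hr' : r < n := lt_trans hlt hnm
      have := h ⟨r, hlt⟩
      have h0 : H (Fin.castLE (le_of_lt hnm) ⟨r, hlt⟩) ⟨r, hlt⟩ = 0 :=
        hzero _ (by simp) _
      rw [h0] at this
      exact absurd this (by norm_num)
  · -- main case: `r = m`, pivots are the identity, `H` is upper triangular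
    subst heq
    have hjid : ∀ x : Fin r, j x = x := fin_strictMono_id hjmono
    -- diagonal entries are positive
    have hdiagpos : ∀ x : Fin r, 0 < H (Fin.castLE (le_of_lt hnm) x) x := by
      intro x
      have := hpos x
      rw [hjid x] at this
      convert this using 2
    set D : ℤ := ∏ x : Fin r, H (Fin.castLE (le_of_lt hnm) x) x with hD
    have hDpos : 0 < D :=
      Finset.prod_pos fun x _ => hdiagpos x
    -- the minor given by the first `r` rows equals `D`
    have hsmcast : StrictMono (Fin.castLE (le_of_lt hnm) : Fin r → Fin n) :=
      Fin.strictMono_castLE _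
    have hdet_cast : (H.submatrix (Fin.castLE (le_of_lt hnm)) c).det = D := by
      rw [Matrix.det_of_upperTriangular]
      · rfl
      · intro a b hab
        have := hlow a b (by rw [hjid a]; exact hab)
        convert this using 2
        rfl
    -- any other minor vanishes
    have hdet_other : ∀ ρ : Fin r → Fin n, StrictMono ρ →
        (H.submatrix ρ c).det = D ∨ (H.submatrix ρ c).det = 0 := by
      intro ρ hρ
      by_cases hall : ∀ x : Fin r, ((ρ x : Fin n) : ℕ) < r
      · left
        have hid : ∀ x : Fin r, ρ x = Fin.castLE (le_of_lt hnm) x := by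
          intro x
          have hsm' : StrictMono (fun x : Fin r => (⟨(ρ x : ℕ), hall x⟩ : Fin r)) := by
            intro a b hab
            simp only [Fin.mk_lt_mk]
            exact hρ hab
          have h := fin_strictMono_id hsm' x
          have hval : ((ρ x : Fin n) : ℕ) = (x : ℕ) := congrArg Fin.val h
          exact Fin.ext hval
        rw [← hdet_cast]
        congr 1
        ext a b
        simp only [Matrix.submatrix_apply]
        rw [hid a]
      · right
        push_neg at hall
        obtain ⟨x, hx⟩ := hall
        apply Matrix.det_eq_zero_of_row_eq_zero x
        intro l
        simp [Matrix.submatrix_apply, hzero (ρ x) hx]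
    -- hence the gcd equals `D`
    have hgcd : minorsGcd H c = D := by
      have hdvd1 : minorsGcd H c ∣ D := by
        rw [← hdet_cast]
        unfold minorsGcd
        exact Finset.gcd_dvd (Finset.mem_univ
          (⟨Fin.castLE (le_of_lt hnm), hsmcast⟩ : {ρ : Fin r → Fin n // StrictMono ρ}))
      have hdvd2 : D ∣ minorsGcd H c := by
        unfold minorsGcd
        apply Finset.dvd_gcd
        rintro ⟨ρ, hρ⟩ -
        rcases hdet_other ρ hρ with h | h <;> rw [h]
        · exact dvd_zero _
      have hassoc : Associated (minorsGcd H c) D := associated_of_dvd_dvd hdvd1 hdvd2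
      rcases Int.associated_iff.mp hassoc with h | h
      · exact h
      · have := minorsGcd_nonneg H c; omega
    rw [hgcd, hD]
    constructor
    · intro h i
      exact (prod_pos_eq_one_iff Finset.univ _ (fun x _ => hdiagpos x)).mp h i
        (Finset.mem_univ i)
    · intro h
      exact (prod_pos_eq_one_iff Finset.univ _ (fun x _ => hdiagpos x)).mpr
        fun x _ => h x
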